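/- Let k ≥ 3 and let T be a tree with at least k pendant vertices. Let S be a k-subset of the leaves of T and v ∈ S. Then d_T(S) = d_T(S \ {v}) + l_v(S), where l_v(S) is the distance in T from v to the nearest branching vertex (vertex of degree ≥ 3) of the Steiner tree T_S of S. -/

import Mathlib

open SimpleGraph

/-- The Steiner distance of a vertex set `S` in `G`: the minimum number of edges of a
connected subgraph of `G` whose vertex set contains `S`. -/
noncomputable def steinerDist {V : Type*} (G : SimpleGraph V) (S : Finset V) : ℕ :=
  sInf {n | ∃ H : G.Subgraph, H.Connected ∧ ↑S ⊆ H.verts ∧ H.edgeSet.ncard = n}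

/-- The Steiner `k`-diameter of `G`: the maximum Steiner distance over `k`-subsets. -/
noncomputable def steinerDiam {V : Type*} [Fintype V] [DecidableEq V]
    (G : SimpleGraph V) (k : ℕ) : ℕ :=
  Finset.sup (Finset.univ.filter fun S : Finset V => S.card = k) (steinerDist G)

/-- The Steiner `(k,k')`-eccentricity of a `k'`-subset `S'`. -/
noncomputable def steinerEcc {V : Type*} [Fintype V] [DecidableEq V]
    (G : SimpleGraph V) (k : ℕ) (S' : Finset V) : ℕ :=
  Finset.sup (Finset.univ.filter fun S : Finset V => S.card = k ∧ S' ⊆ S) (steinerDist G)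

/-- The Steiner `(k,k')`-radius of `G`. -/
noncomputable def steinerRadius {V : Type*} [Fintype V] [DecidableEq V]
    (G : SimpleGraph V) (k k' : ℕ) : ℕ :=
  sInf {n | ∃ S' : Finset V, S'.card = k' ∧ steinerEcc G k S' = n}

/-- The diameter of `G`: the maximum distance between two vertices. -/
noncomputable def gDiam {V : Type*} [Fintype V] (G : SimpleGraph V) : ℕ :=
  Finset.sup Finset.univ (fun p : V × V => G.dist p.1 p.2)

/-- The number of pendant vertices (leaves) of `G`. -/
noncomputable def leafCount {V : Type*} [Fintype V] [DecidableEq V]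
    (G : SimpleGraph V) [DecidableRel G.Adj] : ℕ :=
  (Finset.univ.filter fun v => G.degree v = 1).card


namespace SteinerAux

variable {V : Type*} {G : SimpleGraph V}

/-- The canonical geodesic path between two vertices of a tree. -/
noncomputable def tpath (hT : G.IsTree) (a b : V) : G.Path a b :=
  ⟨(hT.isConnected.exists_path_of_dist a b).choose,
   (hT.isConnected.exists_path_of_dist a b).choose_spec.1⟩

lemma tpath_length (hT : G.IsTree) (a b : V) :
    (tpath hT a b).1.length = G.dist a b :=
  (hT.isConnected.exists_path_of_dist a b).choose_spec.2

lemma tpath_unique (hT : G.IsTree) {a b : V} (p : G.Walk a b) (hp : p.IsPath) :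
    p = (tpath hT a b).1 :=
  congrArg Subtype.val (hT.2.path_unique ⟨p, hp⟩ (tpath hT a b))

lemma toSubgraph_le_of {a b : V} (q : G.Walk a b) (H : G.Subgraph)
    (hv : ∀ x ∈ q.support, x ∈ H.verts)
    (he : ∀ u w, s(u, w) ∈ q.edges → H.Adj u w) : q.toSubgraph ≤ H := by
  induction q with
  | nil =>
    rw [Walk.toSubgraph, singletonSubgraph_le_iff]
    exact hv _ (by simp)
  | cons h p ih =>
    rw [Walk.toSubgraph]
    refine sup_le (subgraphOfAdj_le_of_adj _ ?_) (ih ?_ ?_)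
    · exact he _ _ (by simp)
    · intro x hx; exact hv x (by simp [hx])
    · intro u w huw; exact he u w (by simp [huw])

lemma tpath_toSubgraph_le (hT : G.IsTree) {H : G.Subgraph} (hc : H.Connected)
    {a b : V} (ha : a ∈ H.verts) (hb : b ∈ H.verts) :
    (tpath hT a b).1.toSubgraph ≤ H := by
  classical
  obtain ⟨p, hp⟩ :=
    (H.preconnected_iff_forall_exists_walk_subgraph).mp hc.preconnected ha hb
  have hbp : p.bypass = (tpath hT a b).1 := tpath_unique hT _ p.bypass_isPath
  rw [← hbp]
  refine le_trans (toSubgraph_le_of _ _ ?_ ?_) hp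
  · intro x hx
    rw [Walk.mem_verts_toSubgraph]
    exact p.support_bypass_subset hx
  · intro u w huw
    rw [← Subgraph.mem_edgeSet, Walk.mem_edges_toSubgraph]
    exact p.edges_bypass_subset huw

variable [DecidableEq V]

/-- The union of geodesics from `a0` to elements of `S0`. -/
noncomputable def stT (hT : G.IsTree) (a0 : V) (S0 : Finset V) : G.Subgraph :=
  S0.sup fun b => (tpath hT a0 b).1.toSubgraph

lemma mem_stT_verts (hT : G.IsTree) (a0 : V) (S0 : Finset V) (x : V) :
    x ∈ (stT hT a0 S0).verts ↔ ∃ b ∈ S0, x ∈ (tpath hT a0 b).1.support := by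
  classical
  induction S0 using Finset.induction with
  | empty => simp [stT]
  | insert _ _ h ih =>
    unfold stT at ih ⊢
    rw [Finset.sup_insert]
    simp [Subgraph.verts_sup, ih, Walk.mem_verts_toSubgraph, or_and_right, exists_or]

lemma mem_stT_edgeSet (hT : G.IsTree) (a0 : V) (S0 : Finset V) (e : Sym2 V) :
    e ∈ (stT hT a0 S0).edgeSet ↔ ∃ b ∈ S0, e ∈ (tpath hT a0 b).1.edges := by
  classical
  induction S0 using Finset.induction with
  | empty => simp [stT, Subgraph.edgeSet_bot]
  | insert _ _ h ih =>
    unfold stT at ih ⊢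
    rw [Finset.sup_insert]
    simp [Subgraph.edgeSet_sup, ih, Walk.mem_edges_toSubgraph, or_and_right, exists_or]

lemma subset_stT_verts (hT : G.IsTree) (a0 : V) (S0 : Finset V) :
    ↑S0 ⊆ (stT hT a0 S0).verts := fun b hb =>
  (mem_stT_verts hT a0 S0 b).mpr ⟨b, hb, Walk.end_mem_support _⟩

lemma stT_connected (hT : G.IsTree) (a0 : V) {S0 : Finset V} (hS0 : S0.Nonempty) :
    (stT hT a0 S0).Connected := by
  classical
  induction S0 using Finset.induction with
  | empty => exact absurd hS0 (by simp)
  | @insert b S0 h ih =>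
    unfold stT at ih ⊢
    rw [Finset.sup_insert]
    rcases S0.eq_empty_or_nonempty with rfl | hne
    · simpa using (tpath hT a0 b).1.toSubgraph_connected
    · refine Subgraph.connected_sup ((tpath hT a0 b).1.toSubgraph_connected).preconnected (ih hne).preconnected ⟨a0, ?_⟩
      rw [Subgraph.verts_inf]
      exact ⟨Walk.start_mem_verts_toSubgraph _,
        (mem_stT_verts hT a0 S0 a0).mpr ⟨hne.choose, hne.choose_spec, Walk.start_mem_support _⟩⟩

lemma stT_edgeSet_subset (hT : G.IsTree) {a0 : V} {S0 : Finset V} {H : G.Subgraph}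
    (hc : H.Connected) (ha0 : a0 ∈ H.verts) (hsub : ↑S0 ⊆ H.verts) :
    (stT hT a0 S0).edgeSet ⊆ H.edgeSet := by
  intro e he
  obtain ⟨b, hb, he⟩ := (mem_stT_edgeSet hT a0 S0 e).mp he
  refine Subgraph.edgeSet_mono (tpath_toSubgraph_le hT hc ha0 (hsub hb)) ?_
  rw [Walk.mem_edges_toSubgraph]
  exact he

lemma steinerDist_eq [Finite V] (hT : G.IsTree) {S0 : Finset V} {a0 : V} (ha0 : a0 ∈ S0) :
    sInf {n | ∃ H : G.Subgraph, H.Connected ∧ ↑S0 ⊆ H.verts ∧ H.edgeSet.ncard = n}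
      = (stT hT a0 S0).edgeSet.ncard := by
  have hfeas : (stT hT a0 S0).edgeSet.ncard ∈
      {n | ∃ H : G.Subgraph, H.Connected ∧ ↑S0 ⊆ H.verts ∧ H.edgeSet.ncard = n} :=
    ⟨_, stT_connected hT a0 ⟨a0, ha0⟩, subset_stT_verts hT a0 S0, rfl⟩
  refine le_antisymm (Nat.sInf_le hfeas) (le_csInf ⟨_, hfeas⟩ ?_)
  rintro n ⟨H, hc, hsub, rfl⟩
  exact Set.ncard_le_ncard (stT_edgeSet_subset hT hc (hsub ha0) hsub) (Set.toFinite _)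

lemma two_neighbors_of_interior (hT : G.IsTree) {a b x : V}
    (hx : x ∈ (tpath hT a b).1.support) (hxa : x ≠ a) (hxb : x ≠ b) :
    ∃ y1 y2, y1 ≠ y2 ∧ s(x, y1) ∈ (tpath hT a b).1.edges ∧
      s(x, y2) ∈ (tpath hT a b).1.edges := by
  set p := (tpath hT a b).1 with hpdef
  have hpath : p.IsPath := (tpath hT a b).2
  -- first neighbor from the reversed prefix
  have h1n : ¬ (p.takeUntil x hx).reverse.Nil := Walk.not_nil_of_ne hxa
  obtain ⟨y1, hadj1, q1, hq1⟩ := Walk.not_nil_iff.mp h1n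
  have he1 : s(x, y1) ∈ (p.takeUntil x hx).edges := by
    have : s(x, y1) ∈ (p.takeUntil x hx).reverse.edges := by
      rw [hq1]; exact List.mem_cons_self
    rwa [Walk.edges_reverse, List.mem_reverse] at this
  -- second neighbor from the suffix
  have h2n : ¬ (p.dropUntil x hx).Nil := Walk.not_nil_of_ne hxb
  obtain ⟨y2, hadj2, q2, hq2⟩ := Walk.not_nil_iff.mp h2n
  have he2 : s(x, y2) ∈ (p.dropUntil x hx).edges := by
    rw [hq2]; exact List.mem_cons_self
  refine ⟨y1, y2, ?_, (p.edges_takeUntil_subset hx) he1, (p.edges_dropUntil_subset hx) he2⟩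
  rintro rfl
  have hnodup : ((p.takeUntil x hx).edges ++ (p.dropUntil x hx).edges).Nodup := by
    rw [← Walk.edges_append, Walk.take_spec]
    exact hpath.isTrail.edges_nodup
  exact (List.disjoint_of_nodup_append hnodup) he1 he2

lemma endpoint_of_degree_one [Fintype V] [DecidableRel G.Adj] (hT : G.IsTree) {a b x : V}
    (hx : x ∈ (tpath hT a b).1.support) (hdeg : G.degree x = 1) : x = a ∨ x = b := by
  by_contra hcon
  push_neg at hcon
  obtain ⟨y1, y2, hne, he1, he2⟩ := two_neighbors_of_interior hT hx hcon.1 hcon.2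
  have h1 : y1 ∈ G.neighborFinset x := by
    rw [mem_neighborFinset]; exact (Walk.adj_of_mem_edges _ he1)
  have h2 : y2 ∈ G.neighborFinset x := by
    rw [mem_neighborFinset]; exact (Walk.adj_of_mem_edges _ he2)
  have : 1 < (G.neighborFinset x).card := Finset.one_lt_card.mpr ⟨y1, h1, y2, h2, hne⟩
  rw [card_neighborFinset_eq_degree, hdeg] at this
  omega

lemma edges_start_subset {a b : V} (p : G.Walk a b) (hp : p.IsPath) :
    {y | s(a, y) ∈ p.edges} ⊆ {p.getVert 1} := by
  cases p with
  | nil => simp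
  | cons h q =>
    intro y hy
    simp only [Walk.edges_cons, List.mem_cons, Set.mem_setOf_eq] at hy
    rcases hy with hy | hy
    · rw [Sym2.eq_iff] at hy
      rcases hy with ⟨-, rfl⟩ | ⟨rfl, rfl⟩
      · simp
      · exact absurd rfl h.ne
    · exact absurd (Walk.fst_mem_support_of_mem_edges q hy)
        ((Walk.cons_isPath_iff _ _).mp hp).2

lemma ncard_path_neighbors_le_two [Finite V] {a b : V} (p : G.Walk a b) (hp : p.IsPath)
    (w : V) : {y | s(w, y) ∈ p.edges}.ncard ≤ 2 := by
  induction p with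
  | nil => simp
  | @cons a c b h q ih =>
    have hq : q.IsPath := hp.of_cons
    by_cases hwa : w = a
    · subst hwa
      calc {y | s(w, y) ∈ (Walk.cons h q).edges}.ncard
          ≤ ({(Walk.cons h q).getVert 1} : Set V).ncard :=
            Set.ncard_le_ncard (edges_start_subset _ hp) (Set.toFinite _)
        _ ≤ 2 := by simp
    by_cases hwc : w = c
    · subst hwc
      have hsub : {y | s(w, y) ∈ (Walk.cons h q).edges} ⊆ insert a {q.getVert 1} := by
        intro y hy
        simp only [Walk.edges_cons, List.mem_cons, Set.mem_setOf_eq] at hy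
        rcases hy with hy | hy
        · rw [Sym2.eq_iff] at hy
          rcases hy with ⟨h1, -⟩ | ⟨-, rfl⟩
          · exact absurd h1 hwa
          · exact Set.mem_insert _ _
        · exact Set.mem_insert_of_mem _ (edges_start_subset q hq hy)
      calc {y | s(w, y) ∈ (Walk.cons h q).edges}.ncard
          ≤ (insert a ({q.getVert 1} : Set V)).ncard :=
            Set.ncard_le_ncard hsub (Set.toFinite _)
        _ ≤ ({q.getVert 1} : Set V).ncard + 1 := Set.ncard_insert_le _ _
        _ ≤ 2 := by simp
    · have hsub : {y | s(w, y) ∈ (Walk.cons h q).edges} ⊆ {y | s(w, y) ∈ q.edges} := by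
        intro y hy
        simp only [Walk.edges_cons, List.mem_cons, Set.mem_setOf_eq] at hy ⊢
        rcases hy with hy | hy
        · rw [Sym2.eq_iff] at hy
          rcases hy with ⟨h1, -⟩ | ⟨h2, -⟩
          · exact absurd h1 hwa
          · exact absurd h2 hwc
        · exact hy
      exact le_trans (Set.ncard_le_ncard hsub (Set.toFinite _)) (ih hq)

end SteinerAux


theorem stmt14 {V : Type*} [Fintype V] [DecidableEq V] (G : SimpleGraph V)
    [DecidableRel G.Adj] (hT : G.IsTree) (k : ℕ) (hk : 3 ≤ k)
    (hleaves : k ≤ leafCount G) (S : Finset V) (hS : S.card = k)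
    (hSleaf : ∀ v ∈ S, G.degree v = 1) (v : V) (hv : v ∈ S)
    (H : G.Subgraph) (hHc : H.Connected) (hHS : ↑S ⊆ H.verts)
    (hHmin : H.edgeSet.ncard = steinerDist G S) :
    steinerDist G S = steinerDist G (S.erase v) +
      sInf {d | ∃ w ∈ H.verts, 3 ≤ (H.neighborSet w).ncard ∧ G.dist v w = d} := by
  classical
  have hcardS' : (S.erase v).card = k - 1 := by
    rw [Finset.card_erase_of_mem hv, hS]
  obtain ⟨a0, ha0⟩ : (S.erase v).Nonempty := Finset.card_pos.mp (by omega)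
  have ha0S : a0 ∈ S := Finset.mem_of_mem_erase ha0
  have ha0v : a0 ≠ v := Finset.ne_of_mem_erase ha0
  set U' := SteinerAux.stT hT a0 (S.erase v) with hU'def
  have hU'conn : U'.Connected := SteinerAux.stT_connected hT a0 ⟨a0, ha0⟩
  have hS'U' : ↑(S.erase v) ⊆ U'.verts := SteinerAux.subset_stT_verts hT a0 _
  have hvdeg : G.degree v = 1 := hSleaf v hv
  have hvU' : v ∉ U'.verts := by
    intro hmem
    obtain ⟨b, hb, hsup⟩ := (SteinerAux.mem_stT_verts hT a0 (S.erase v) v).mp hmem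
    rcases SteinerAux.endpoint_of_degree_one hT hsup hvdeg with rfl | rfl
    · exact ha0v rfl
    · exact (Finset.notMem_erase v S) hb
  obtain ⟨w0, hw0U', hw0min⟩ :=
    Set.exists_min_image U'.verts (G.dist v) (Set.toFinite _) ⟨a0, hS'U' ha0⟩
  set p := (SteinerAux.tpath hT v w0).1 with hpdef
  have hppath : p.IsPath := (SteinerAux.tpath hT v w0).2
  have hplen : p.length = G.dist v w0 := SteinerAux.tpath_length hT v w0
  have hvw0 : v ≠ w0 := fun h => hvU' (h ▸ hw0U')
  have hsupU' : ∀ x, ∀ hx : x ∈ p.support, x ∈ U'.verts → x = w0 := by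
    intro x hx hxU
    have h1 : G.dist v x ≤ (p.takeUntil x hx).length := SimpleGraph.dist_le _
    have h2 : G.dist v w0 ≤ G.dist v x := hw0min x hxU
    have h3 : (p.takeUntil x hx).length + (p.dropUntil x hx).length = p.length := by
      rw [← Walk.length_append, Walk.take_spec]
    have h4 : (p.dropUntil x hx).length = 0 := by omega
    exact Walk.eq_of_length_eq_zero h4
  set W : G.Subgraph := U' ⊔ p.toSubgraph with hWdef
  have hWedge : W.edgeSet = U'.edgeSet ∪ p.toSubgraph.edgeSet := Subgraph.edgeSet_sup
  have hdisj : Disjoint U'.edgeSet p.toSubgraph.edgeSet := by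
    rw [Set.disjoint_left]
    intro e he1 he2
    induction e using Sym2.ind with
    | _ x y =>
      rw [Walk.mem_edges_toSubgraph] at he2
      have hadj : U'.Adj x y := Subgraph.mem_edgeSet.mp he1
      have hx : x = w0 :=
        hsupU' x (Walk.fst_mem_support_of_mem_edges p he2) hadj.fst_mem
      have hy : y = w0 :=
        hsupU' y (Walk.snd_mem_support_of_mem_edges p he2) hadj.snd_mem
      exact hadj.adj_sub.ne (hx.trans hy.symm)
  have hpcard : p.toSubgraph.edgeSet.ncard = G.dist v w0 := by
    rw [Walk.edgeSet_toSubgraph,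
      show p.edgeSet = ↑p.edges.toFinset from (List.coe_toFinset _).symm,
      Set.ncard_coe_finset, List.toFinset_card_of_nodup hppath.isTrail.edges_nodup,
      Walk.length_edges, hplen]
  have hWcard : W.edgeSet.ncard = U'.edgeSet.ncard + G.dist v w0 := by
    rw [hWedge, Set.ncard_union_eq hdisj (Set.toFinite _) (Set.toFinite _), hpcard]
  have hU'le : U' ≤ SteinerAux.stT hT a0 S := Finset.sup_mono (Finset.erase_subset v S)
  have hUSconn : (SteinerAux.stT hT a0 S).Connected :=
    SteinerAux.stT_connected hT a0 ⟨a0, ha0S⟩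
  have hWsub : W.edgeSet ⊆ (SteinerAux.stT hT a0 S).edgeSet := by
    rw [hWedge]
    refine Set.union_subset (Subgraph.edgeSet_mono hU'le) (Subgraph.edgeSet_mono ?_)
    exact SteinerAux.tpath_toSubgraph_le hT hUSconn
      (SteinerAux.subset_stT_verts hT a0 S (Finset.mem_coe.mpr hv)) (hU'le.1 hw0U')
  have hWconn : W.Connected := by
    refine Subgraph.connected_sup hU'conn.preconnected p.toSubgraph_connected.preconnected ⟨w0, ?_⟩
    rw [Subgraph.verts_inf]
    exact ⟨hw0U', p.end_mem_verts_toSubgraph⟩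
  have hSW : ↑S ⊆ W.verts := by
    intro x hx
    rw [hWdef, Subgraph.verts_sup]
    by_cases hxv : x = v
    · exact Or.inr (by rw [hxv]; exact p.start_mem_verts_toSubgraph)
    · exact Or.inl (hS'U' (Finset.mem_coe.mpr (Finset.mem_erase.mpr ⟨hxv, hx⟩)))
  have hWfeas : steinerDist G S ≤ W.edgeSet.ncard := Nat.sInf_le ⟨W, hWconn, hSW, rfl⟩
  have hsdS : steinerDist G S = (SteinerAux.stT hT a0 S).edgeSet.ncard :=
    SteinerAux.steinerDist_eq hT ha0S
  have hsdS' : steinerDist G (S.erase v) = U'.edgeSet.ncard :=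
    SteinerAux.steinerDist_eq hT ha0
  have hWeq : W.edgeSet = (SteinerAux.stT hT a0 S).edgeSet :=
    Set.eq_of_subset_of_ncard_le hWsub (by rw [← hsdS]; exact hWfeas) (Set.toFinite _)
  have hHeq : H.edgeSet = W.edgeSet := by
    have hsub : (SteinerAux.stT hT a0 S).edgeSet ⊆ H.edgeSet :=
      SteinerAux.stT_edgeSet_subset hT hHc (hHS (Finset.mem_coe.mpr ha0S)) hHS
    have h2 : (SteinerAux.stT hT a0 S).edgeSet = H.edgeSet :=
      Set.eq_of_subset_of_ncard_le hsub (by rw [hHmin, hsdS]) (Set.toFinite _)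
    rw [← h2, ← hWeq]
  have hHadj : ∀ x y, H.Adj x y ↔ (s(x, y) ∈ U'.edgeSet ∨ s(x, y) ∈ p.edges) := by
    intro x y
    rw [← Subgraph.mem_edgeSet, hHeq, hWedge, Set.mem_union, Walk.edgeSet_toSubgraph]
    exact Iff.rfl
  have hrev : ¬ p.reverse.Nil := Walk.not_nil_of_ne (Ne.symm hvw0)
  obtain ⟨xp, hadjxp, q, hq⟩ := Walk.not_nil_iff.mp hrev
  have hxpedge : s(w0, xp) ∈ p.edges := by
    have h : s(w0, xp) ∈ p.reverse.edges := by rw [hq]; exact List.mem_cons_self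
    rwa [Walk.edges_reverse, List.mem_reverse] at h
  have hxpsup : xp ∈ p.support := Walk.snd_mem_support_of_mem_edges p hxpedge
  have hxpU' : xp ∉ U'.verts := fun hmem => hadjxp.ne' (hsupU' xp hxpsup hmem)
  have hHxp : H.Adj w0 xp := (hHadj w0 xp).mpr (Or.inr hxpedge)
  have hw0H : w0 ∈ H.verts := hHxp.fst_mem
  have hw0NotLeaf : G.degree w0 ≠ 1 := by
    intro hdeg
    obtain ⟨b', hb'⟩ : ((S.erase v).erase w0).Nonempty := by
      rw [← Finset.card_pos]
      have h := Finset.pred_card_le_card_erase (s := S.erase v) (a := w0)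
      omega
    have hb'S' : b' ∈ S.erase v := Finset.mem_of_mem_erase hb'
    have hb'w0 : b' ≠ w0 := Finset.ne_of_mem_erase hb'
    obtain ⟨qw, hqw⟩ := (U'.preconnected_iff_forall_exists_walk_subgraph).mp
      hU'conn.preconnected hw0U' (hS'U' hb'S')
    have hqwn : ¬ qw.Nil := Walk.not_nil_of_ne (Ne.symm hb'w0)
    obtain ⟨y, hadjy, q2, hq2⟩ := Walk.not_nil_iff.mp hqwn
    have hyU' : y ∈ U'.verts := by
      have hy : y ∈ qw.support := by rw [hq2]; simp
      exact hqw.1 ((Walk.mem_verts_toSubgraph qw).mpr hy)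
    have h1 : y ∈ G.neighborFinset w0 := by rw [mem_neighborFinset]; exact hadjy
    have h2 : xp ∈ G.neighborFinset w0 := by rw [mem_neighborFinset]; exact hadjxp
    have hne : y ≠ xp := fun h => hxpU' (h ▸ hyU')
    have h3 : 1 < (G.neighborFinset w0).card := Finset.one_lt_card.mpr ⟨y, h1, xp, h2, hne⟩
    rw [card_neighborFinset_eq_degree, hdeg] at h3
    omega
  obtain ⟨b, hb, hw0sup⟩ := (SteinerAux.mem_stT_verts hT a0 (S.erase v) w0).mp hw0U'
  have hw0a0 : w0 ≠ a0 := fun h => hw0NotLeaf (h ▸ hSleaf a0 ha0S)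
  have hw0b : w0 ≠ b := fun h => hw0NotLeaf (h ▸ hSleaf b (Finset.mem_of_mem_erase hb))
  obtain ⟨y1, y2, hy12, he1, he2⟩ :=
    SteinerAux.two_neighbors_of_interior hT hw0sup hw0a0 hw0b
  have he1' : s(w0, y1) ∈ U'.edgeSet :=
    (SteinerAux.mem_stT_edgeSet hT a0 (S.erase v) _).mpr ⟨b, hb, he1⟩
  have he2' : s(w0, y2) ∈ U'.edgeSet :=
    (SteinerAux.mem_stT_edgeSet hT a0 (S.erase v) _).mpr ⟨b, hb, he2⟩
  have hy1U' : y1 ∈ U'.verts := (Subgraph.mem_edgeSet.mp he1').snd_mem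
  have hy2U' : y2 ∈ U'.verts := (Subgraph.mem_edgeSet.mp he2').snd_mem
  have hxy1 : xp ≠ y1 := fun h => hxpU' (h ▸ hy1U')
  have hxy2 : xp ≠ y2 := fun h => hxpU' (h ▸ hy2U')
  have h3n : 3 ≤ (H.neighborSet w0).ncard := by
    have hsub : ({y1, y2, xp} : Set V) ⊆ H.neighborSet w0 := by
      intro z hz
      rcases hz with rfl | rfl | rfl
      · exact (hHadj w0 z).mpr (Or.inl he1')
      · exact (hHadj w0 z).mpr (Or.inl he2')
      · exact hHxp
    have h3 : ({y1, y2, xp} : Set V).ncard = 3 :=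
      Set.ncard_eq_three.mpr ⟨y1, y2, xp, hy12, Ne.symm hxy1, Ne.symm hxy2, rfl⟩
    calc (3 : ℕ) = ({y1, y2, xp} : Set V).ncard := h3.symm
      _ ≤ (H.neighborSet w0).ncard := Set.ncard_le_ncard hsub (Set.toFinite _)
  have hmemB : G.dist v w0 ∈
      {d | ∃ w ∈ H.verts, 3 ≤ (H.neighborSet w).ncard ∧ G.dist v w = d} :=
    ⟨w0, hw0H, h3n, rfl⟩
  have hlb : ∀ d ∈ {d | ∃ w ∈ H.verts, 3 ≤ (H.neighborSet w).ncard ∧ G.dist v w = d},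
      G.dist v w0 ≤ d := by
    rintro d ⟨w, hwH, h3, rfl⟩
    have hwU' : w ∈ U'.verts := by
      by_contra hwn
      have hsub : H.neighborSet w ⊆ {y | s(w, y) ∈ p.edges} := by
        intro y hy
        rw [Subgraph.mem_neighborSet] at hy
        rcases (hHadj w y).mp hy with h | h
        · exact absurd (Subgraph.mem_edgeSet.mp h).fst_mem hwn
        · exact h
      have hle := Set.ncard_le_ncard hsub (Set.toFinite _)
      have h2 := SteinerAux.ncard_path_neighbors_le_two p hppath w
      omega
    exact hw0min w hwU'
  have hsinf : sInf {d | ∃ w ∈ H.verts, 3 ≤ (H.neighborSet w).ncard ∧ G.dist v w = d}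
      = G.dist v w0 :=
    le_antisymm (Nat.sInf_le hmemB) (hlb _ (Nat.sInf_mem ⟨_, hmemB⟩))
  calc steinerDist G S = (SteinerAux.stT hT a0 S).edgeSet.ncard := hsdS
    _ = W.edgeSet.ncard := by rw [hWeq]
    _ = U'.edgeSet.ncard + G.dist v w0 := hWcard
    _ = steinerDist G (S.erase v) +
        sInf {d | ∃ w ∈ H.verts, 3 ≤ (H.neighborSet w).ncard ∧ G.dist v w = d} := by
      rw [hsdS', hsinf]
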